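/- For every c > 0 and every L̄ > 0 there exists a constant C such that for all ℓ ∈ (0, L̄] the function Y_c(ℓ) = 2·arctan( e^c · tan( (1/2)·arctan(sinh(ℓ/2)) ) ) is differentiable and satisfies | Y_c(ℓ) − e^c·ℓ/2 | ≤ C·ℓ³ and | (d/dℓ)Y_c(ℓ) − e^c/2 | ≤ C·ℓ². -/

import Mathlib

open Real

lemma tan_half' (θ : ℝ) (h : Real.cos (θ/2) ≠ 0) :
    Real.tan (θ/2) = Real.sin θ / (1 + Real.cos θ) := by
  rw [Real.tan_eq_sin_div_cos, show θ = 2*(θ/2) by ring, Real.sin_two_mul, Real.cos_two_mul]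
  have h2 : 1 + (2 * Real.cos (θ/2) ^ 2 - 1) = 2 * Real.cos (θ/2)^2 := by ring
  rw [h2]
  field_simp

lemma tan_half_arctan_sinh (x : ℝ) :
    Real.tan ((1/2) * Real.arctan (Real.sinh x)) = Real.sinh x / (Real.cosh x + 1) := by
  have hK : (0:ℝ) < Real.cosh x := Real.cosh_pos x
  have hθ := Real.arctan_mem_Ioo (Real.sinh x)
  have hcos : Real.cos (Real.arctan (Real.sinh x) / 2) ≠ 0 := by
    have hpi : (0:ℝ) < π := Real.pi_pos
    apply ne_of_gt
    apply Real.cos_pos_of_mem_Ioo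
    constructor <;> [nlinarith [hθ.1]; nlinarith [hθ.2]]
  have hsq : Real.sqrt (1 + Real.sinh x ^ 2) = Real.cosh x := by
    rw [show 1 + Real.sinh x ^ 2 = Real.cosh x ^ 2 by rw [Real.cosh_sq]; ring]
    exact Real.sqrt_sq hK.le
  have hs : Real.sin (Real.arctan (Real.sinh x)) = Real.sinh x / Real.cosh x := by
    rw [Real.sin_arctan, hsq]
  have hc : Real.cos (Real.arctan (Real.sinh x)) = 1 / Real.cosh x := by
    rw [Real.cos_arctan, hsq]
  rw [show (1/2) * Real.arctan (Real.sinh x) = Real.arctan (Real.sinh x) / 2 by ring,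
    tan_half' _ hcos, hs, hc]
  field_simp

/-- `Y_c(ℓ) = 2 arctan(e^c · tan((1/2) arctan(sinh(ℓ/2))))`; geometrically
`π/2 − Y_c(ℓ) = (ℓ/(2π)) Z_c(ℓ)` where `{Z_c(ℓ)}×S¹` is the circle in the standard collar
around a geodesic of length `ℓ` at hyperbolic distance `c` from the collar boundary. -/
noncomputable def Yc (c ℓ : ℝ) : ℝ :=
  2 * Real.arctan (Real.exp c * Real.tan ((1 / 2) * Real.arctan (Real.sinh (ℓ / 2))))

lemma Yc_hasDerivAt (c ℓ : ℝ) :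
    HasDerivAt (Yc c) (Real.exp c * (Real.cosh (ℓ/2) + 1) /
      ((Real.cosh (ℓ/2) + 1)^2 + Real.exp c ^ 2 * Real.sinh (ℓ/2)^2)) ℓ := by
  have hfun : Yc c = fun t => 2 * Real.arctan (Real.exp c *
      (Real.sinh (t/2) / (Real.cosh (t/2) + 1))) := by
    funext t
    rw [Yc, tan_half_arctan_sinh]
  rw [hfun]
  have hK : (0:ℝ) < Real.cosh (ℓ/2) := Real.cosh_pos (ℓ/2)
  have hne : Real.cosh (ℓ/2) + 1 ≠ 0 := by positivity
  have h1 : HasDerivAt (fun t : ℝ => t/2) (1/2) ℓ := (hasDerivAt_id ℓ).div_const 2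
  have hs : HasDerivAt (fun t => Real.sinh (t/2)) (Real.cosh (ℓ/2) * (1/2)) ℓ :=
    by have := (Real.hasDerivAt_sinh (ℓ/2)).comp ℓ h1; exact this
  have hc2 : HasDerivAt (fun t => Real.cosh (t/2) + 1) (Real.sinh (ℓ/2) * (1/2)) ℓ :=
    by have := ((Real.hasDerivAt_cosh (ℓ/2)).comp ℓ h1).add_const 1; exact this
  have hq := hs.div hc2 hne
  have ha := ((Real.hasDerivAt_arctan (Real.exp c *
      (Real.sinh (ℓ/2) / (Real.cosh (ℓ/2) + 1)))).comp ℓ (hq.const_mul (Real.exp c))).const_mul 2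
  refine ha.congr_deriv (Eq.symm ?_)
  have hid : Real.cosh (ℓ/2)^2 - Real.sinh (ℓ/2)^2 = 1 := Real.cosh_sq_sub_sinh_sq (ℓ/2)
  have hD : (0:ℝ) < (Real.cosh (ℓ/2) + 1)^2 + Real.exp c ^ 2 * Real.sinh (ℓ/2)^2 := by positivity
  have h3 : 1 + (Real.exp c * (Real.sinh (ℓ/2) / (Real.cosh (ℓ/2) + 1)))^2 =
      ((Real.cosh (ℓ/2) + 1)^2 + Real.exp c ^ 2 * Real.sinh (ℓ/2)^2) / (Real.cosh (ℓ/2) + 1)^2 := by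
    field_simp
  have h4 : Real.cosh (ℓ/2) * (1/2) * (Real.cosh (ℓ/2) + 1) -
      Real.sinh (ℓ/2) * (Real.sinh (ℓ/2) * (1/2)) = (Real.cosh (ℓ/2) + 1) / 2 := by
    linear_combination hid / 2
  rw [h3, h4]
  rw [one_div_div]
  field_simp

lemma sinh_abs_le_mul_cosh (M t : ℝ) (ht : 0 ≤ t) (htM : t ≤ M) :
    |Real.sinh t| ≤ Real.cosh M * t := by
  have key := norm_image_sub_le_of_norm_deriv_le_segment'
    (f := Real.sinh) (f' := Real.cosh) (a := 0) (b := t) (C := Real.cosh M)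
    (fun x _ => (Real.hasDerivAt_sinh x).hasDerivWithinAt)
    (fun x hx => by
      rw [Real.norm_eq_abs, abs_of_pos (Real.cosh_pos x)]
      rw [Real.cosh_le_cosh]
      rw [abs_of_nonneg hx.1, abs_of_nonneg (ht.trans htM)]
      exact hx.2.le.trans htM) t (Set.right_mem_Icc.2 ht)
  simpa [Real.norm_eq_abs] using key

lemma deriv_diff_bound (c Lbar : ℝ) (t : ℝ) (ht : 0 ≤ t) (htL : t ≤ Lbar) :
    |Real.exp c * (Real.cosh (t/2) + 1) /
      ((Real.cosh (t/2) + 1)^2 + Real.exp c ^ 2 * Real.sinh (t/2)^2) - Real.exp c / 2| ≤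
    (Real.exp c * (1 + Real.exp c ^ 2) * Real.cosh (Lbar/2)^2 / 32) * t ^ 2 := by
  set E := Real.exp c with hE
  set K := Real.cosh (t/2) with hKdef
  set S := Real.sinh (t/2) with hSdef
  have hEpos : 0 < E := Real.exp_pos c
  have hK1 : 1 ≤ K := Real.one_le_cosh (t/2)
  have hid : K^2 - S^2 = 1 := Real.cosh_sq_sub_sinh_sq (t/2)
  have hD : (0:ℝ) < (K+1)^2 + E^2*S^2 := by positivity
  have hD4 : (4:ℝ) ≤ (K+1)^2 + E^2*S^2 := by nlinarith [sq_nonneg S]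
  have key : E * (K+1) / ((K+1)^2 + E^2*S^2) - E/2
      = -(E * (1+E^2) * S^2) / (2 * ((K+1)^2 + E^2*S^2)) := by
    field_simp
    linear_combination (-1 : ℝ) * hid
  rw [key, abs_div, abs_neg, abs_of_nonneg (by positivity : (0:ℝ) ≤ E*(1+E^2)*S^2),
    abs_of_pos (by positivity : (0:ℝ) < 2*((K+1)^2+E^2*S^2))]
  have hS : |S| ≤ Real.cosh (Lbar/2) * (t/2) := by
    apply sinh_abs_le_mul_cosh
    · linarith
    · linarith
  have hS2 : S^2 ≤ Real.cosh (Lbar/2)^2 * (t/2)^2 := by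
    calc S^2 = |S|^2 := (sq_abs S).symm
    _ ≤ (Real.cosh (Lbar/2) * (t/2))^2 := by
        apply pow_le_pow_left₀ (abs_nonneg S) hS
    _ = Real.cosh (Lbar/2)^2 * (t/2)^2 := by ring
  calc E*(1+E^2)*S^2 / (2*((K+1)^2+E^2*S^2))
      ≤ E*(1+E^2)*(Real.cosh (Lbar/2)^2 * (t/2)^2) / 8 := by
        apply div_le_div₀ (by positivity) _ (by norm_num) (by linarith)
        exact mul_le_mul_of_nonneg_left hS2 (by positivity)
    _ = (E * (1+E^2) * Real.cosh (Lbar/2)^2 / 32) * t^2 := by ring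

/-- `Y_c` is differentiable with `|Y_c(ℓ) − e^c ℓ/2| ≤ C ℓ³` and
`|Y_c′(ℓ) − e^c/2| ≤ C ℓ²` for `ℓ ∈ (0, L̄]`. -/
theorem Yc_expansion (c : ℝ) (hc : 0 < c) (Lbar : ℝ) (hL : 0 < Lbar) :
    ∃ C : ℝ, ∀ ℓ : ℝ, ℓ ∈ Set.Ioc 0 Lbar →
      DifferentiableAt ℝ (Yc c) ℓ ∧
      |Yc c ℓ - Real.exp c * ℓ / 2| ≤ C * ℓ ^ 3 ∧
      |deriv (Yc c) ℓ - Real.exp c / 2| ≤ C * ℓ ^ 2 := by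
  set C := Real.exp c * (1 + Real.exp c ^ 2) * Real.cosh (Lbar/2)^2 / 32 with hC
  have hCpos : 0 < C := by
    have := Real.exp_pos c
    have := Real.cosh_pos (Lbar/2)
    positivity
  refine ⟨C, fun ℓ ⟨hl0, hlL⟩ => ?_⟩
  refine ⟨(Yc_hasDerivAt c ℓ).differentiableAt, ?_, ?_⟩
  · -- value bound via MVT on [0, ℓ]
    have hY0 : Yc c 0 = 0 := by simp [Yc]
    have hf' : ∀ x ∈ Set.Icc (0:ℝ) ℓ,
        HasDerivWithinAt (fun t => Yc c t - Real.exp c * t / 2)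
          (Real.exp c * (Real.cosh (x/2) + 1) /
            ((Real.cosh (x/2) + 1)^2 + Real.exp c ^ 2 * Real.sinh (x/2)^2) - Real.exp c / 2)
          (Set.Icc 0 ℓ) x := by
      intro x _
      have hl : HasDerivAt (fun t : ℝ => Real.exp c * t / 2) (Real.exp c / 2) x := by
        simpa using ((hasDerivAt_id x).const_mul (Real.exp c)).div_const 2
      exact ((Yc_hasDerivAt c x).sub hl).hasDerivWithinAt
    have hbound : ∀ x ∈ Set.Ico (0:ℝ) ℓ,
        ‖Real.exp c * (Real.cosh (x/2) + 1) /
          ((Real.cosh (x/2) + 1)^2 + Real.exp c ^ 2 * Real.sinh (x/2)^2) - Real.exp c / 2‖ ≤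
          C * ℓ ^ 2 := by
      intro x hx
      rw [Real.norm_eq_abs]
      calc _ ≤ C * x ^ 2 := deriv_diff_bound c Lbar x hx.1 (hx.2.le.trans hlL)
        _ ≤ C * ℓ ^ 2 := by
            apply mul_le_mul_of_nonneg_left _ hCpos.le
            apply pow_le_pow_left₀ hx.1 hx.2.le
    have key := norm_image_sub_le_of_norm_deriv_le_segment' hf' hbound ℓ
      (Set.right_mem_Icc.2 hl0.le)
    rw [Real.norm_eq_abs] at key
    simp only [hY0] at key
    calc |Yc c ℓ - Real.exp c * ℓ / 2| ≤ C * ℓ ^ 2 * (ℓ - 0) := by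
          convert key using 2
          ring
      _ = C * ℓ ^ 3 := by ring
  · rw [(Yc_hasDerivAt c ℓ).deriv]
    exact deriv_diff_bound c Lbar ℓ hl0.le hlL
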